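/- Let d, w₁, w₂, w₃ be odd positive integers, χ : ℤ → ℂ d-periodic, ξ ∈ ℂ with appropriate nonvanishing conditions. Then for all n ≥ 0 and y₁, y₂, y₃ ∈ ℂ, the quantity ∑_{k+l+m=n} (n!/(k!l!m!)) T_k(w₁d−1;χ,ξ^{w₂w₃}) T_l(w₂d−1;χ,ξ^{w₁w₃}) T_m(w₃d−1;χ,ξ^{w₁w₂}) w₁^{l+m} w₂^{k+m} w₃^{k+l} is totally symmetric in (w₁,w₂,w₃), i.e. unchanged by every permutation of the three indices. -/

import Mathlib

open Finset PowerSeries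

/-- Generating function of the generalized twisted Euler polynomials:
`2 e^{xt} (ξ^d e^{dt}+1)⁻¹ ∑_{a=0}^{d-1} (-1)^a χ(a) ξ^a e^{at}` in `ℂ[[t]]`. -/
noncomputable def Egf (d : ℕ) (χ : ℤ → ℂ) (ξ x : ℂ) : PowerSeries ℂ :=
  2 * rescale x (exp ℂ) * (ξ ^ d • rescale (d : ℂ) (exp ℂ) + 1)⁻¹ *
    ∑ a ∈ Finset.range d, ((-1 : ℂ) ^ a * χ a * ξ ^ a) • rescale (a : ℂ) (exp ℂ)

/-- The generalized twisted Euler polynomial `E_{n,χ,ξ}(x)`. -/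
noncomputable def E (d : ℕ) (χ : ℤ → ℂ) (ξ x : ℂ) (n : ℕ) : ℂ :=
  (n.factorial : ℂ) * PowerSeries.coeff n (Egf d χ ξ x)

/-- The alternating generalized twisted power sum `T_k(m; χ, ξ)`. -/
noncomputable def T (m : ℕ) (χ : ℤ → ℂ) (ξ : ℂ) (k : ℕ) : ℂ :=
  ∑ a ∈ Finset.range (m + 1), (-1 : ℂ) ^ a * χ a * ξ ^ a * (a : ℂ) ^ k


/-- The triple sum of type Λ₂₃³, as a function of `(w₁, w₂, w₃)`. -/
noncomputable def S (d : ℕ) (χ : ℤ → ℂ) (ξ : ℂ) (n : ℕ) (u v w : ℕ) : ℂ :=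
  ∑ k ∈ Finset.range (n + 1), ∑ l ∈ Finset.range (n + 1 - k),
    (n.factorial : ℂ) / ((k.factorial : ℂ) * (l.factorial : ℂ) * ((n - k - l).factorial : ℂ)) *
      T (u * d - 1) χ (ξ ^ (v * w)) k *
      T (v * d - 1) χ (ξ ^ (u * w)) l *
      T (w * d - 1) χ (ξ ^ (u * v)) (n - k - l) *
      (u : ℂ) ^ (l + (n - k - l)) * (v : ℂ) ^ (k + (n - k - l)) * (w : ℂ) ^ (k + l)


noncomputable def zz (ξ : ℂ) (m : ℕ) : PowerSeries ℂ := (-ξ ^ m) • rescale (m : ℂ) (exp ℂ)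

lemma zz_pow (ξ : ℂ) (m a : ℕ) :
    zz ξ m ^ a = ((-ξ ^ m) ^ a) • rescale ((m * a : ℕ) : ℂ) (exp ℂ) := by
  induction a with
  | zero => simp [rescale_zero, constantCoeff_exp]
  | succ a ih =>
      rw [pow_succ, ih, zz, smul_mul_smul_comm, exp_mul_exp_eq_exp_add, ← pow_succ]
      congr 1
      push_cast
      ring

lemma zz_pow_odd (ξ : ℂ) (m k : ℕ) (hk : Odd k) :
    zz ξ m ^ k = (-(ξ ^ (m * k))) • rescale ((m * k : ℕ) : ℂ) (exp ℂ) := by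
  rw [zz_pow]
  congr 1
  rw [neg_pow, hk.neg_one_pow, ← pow_mul]
  ring

noncomputable def Cser (ξ : ℂ) (p : ℕ) : PowerSeries ℂ :=
  1 + (ξ ^ p) • rescale ((p : ℕ) : ℂ) (exp ℂ)

noncomputable def Aser (d : ℕ) (χ : ℤ → ℂ) (ξ : ℂ) (u m : ℕ) : PowerSeries ℂ :=
  ∑ a ∈ Finset.range (u * d), χ (a : ℤ) • zz ξ m ^ a

noncomputable def Dser (d : ℕ) (χ : ℤ → ℂ) (ξ : ℂ) (m : ℕ) : PowerSeries ℂ :=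
  ∑ b ∈ Finset.range d, χ (b : ℤ) • zz ξ m ^ b

lemma one_sub_zz_pow (ξ : ℂ) (m k : ℕ) (hk : Odd k) :
    1 - zz ξ m ^ k = Cser ξ (m * k) := by
  rw [zz_pow_odd ξ m k hk, Cser, neg_smul, sub_neg_eq_add, add_comm]

lemma geom_period {R : Type*} [CommRing R] (f : ℕ → R) (d u : ℕ)
    (hf : ∀ a, f (a + d) = f a) (x : R) :
    (∑ a ∈ Finset.range (u * d), f a * x ^ a) * (1 - x ^ d)
      = (∑ b ∈ Finset.range d, f b * x ^ b) * (1 - x ^ (u * d)) := by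
  have hmul : ∀ c a, f (a + c * d) = f a := by
    intro c
    induction c with
    | zero => simp
    | succ c ih => intro a; rw [show a + (c+1)*d = (a + c*d) + d by ring, hf, ih]
  induction u with
  | zero => simp
  | succ u ih =>
      rw [show (u + 1) * d = u * d + d by ring, Finset.sum_range_add]
      have h2 : ∑ i ∈ Finset.range d, f (u * d + i) * x ^ (u * d + i)
          = x ^ (u * d) * ∑ b ∈ Finset.range d, f b * x ^ b := by
        rw [Finset.mul_sum]
        refine Finset.sum_congr rfl fun i _ => ?_
        rw [add_comm (u * d) i, hmul u i, pow_add]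
        ring
      rw [h2, add_mul, ih, pow_add]
      ring

lemma Aser_mul_Cser (d : ℕ) (χ : ℤ → ℂ) (hχ : Function.Periodic χ (d : ℤ))
    (ξ : ℂ) (u m : ℕ) (hd : Odd d) (hu : Odd u) :
    Aser d χ ξ u m * Cser ξ (d * m) = Dser d χ ξ m * Cser ξ (d * (u * m)) := by
  have h1 : Cser ξ (d * m) = 1 - zz ξ m ^ d := by
    rw [one_sub_zz_pow ξ m d hd, Nat.mul_comm]
  have h2 : Cser ξ (d * (u * m)) = 1 - zz ξ m ^ (u * d) := by
    rw [one_sub_zz_pow ξ m (u * d) (hu.mul hd)]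
    congr 1
    ring
  rw [h1, h2, Aser, Dser]
  simp only [smul_eq_C_mul]
  exact geom_period (fun a => PowerSeries.C (χ (a : ℤ))) d u
    (fun a => by show PowerSeries.C (χ ((a + d : ℕ) : ℤ)) = _; rw [Nat.cast_add]; exact congrArg _ (hχ a)) (zz ξ m)

lemma constantCoeff_Cser (ξ : ℂ) (p : ℕ) :
    PowerSeries.constantCoeff (Cser ξ p) = 1 + ξ ^ p := by
  have h : PowerSeries.constantCoeff (rescale ((p : ℕ) : ℂ) (exp ℂ)) = 1 := by
    rw [← coeff_zero_eq_constantCoeff_apply, coeff_rescale]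
    simp [constantCoeff_exp, coeff_zero_eq_constantCoeff_apply]
  simp [Cser, h]

lemma coeff_Aser (d : ℕ) (χ : ℤ → ℂ) (ξ : ℂ) (u m k : ℕ) (h : 0 < u * d) :
    PowerSeries.coeff k (Aser d χ ξ u m)
      = T (u * d - 1) χ (ξ ^ m) k * (m : ℂ) ^ k / (k.factorial : ℂ) := by
  have hT : u * d - 1 + 1 = u * d := Nat.succ_pred_eq_of_pos h
  unfold T
  rw [ hT, Aser, map_sum, Finset.sum_mul, Finset.sum_div]
  refine Finset.sum_congr rfl fun a _ => ?_
  rw [zz_pow, map_smul, map_smul, coeff_rescale, coeff_exp]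
  have h1 : (algebraMap ℚ ℂ) (1 / (k.factorial : ℚ)) = ((k.factorial : ℂ))⁻¹ := by
    rw [map_div₀, map_one, map_natCast]
    exact one_div _
  rw [h1]
  have h2 : ((m * a : ℕ) : ℂ) = (m : ℂ) * (a : ℂ) := by push_cast; ring
  have h3 : (-ξ ^ m) ^ a = (-1 : ℂ) ^ a * (ξ ^ m) ^ a := by rw [neg_pow]
  rw [h2, h3, mul_pow]
  simp only [smul_eq_mul]
  ring

lemma S_eq_coeff (d : ℕ) (χ : ℤ → ℂ) (ξ : ℂ) (n u v w : ℕ) (hd0 : 0 < d)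
    (hu : 0 < u) (hv : 0 < v) (hw : 0 < w) :
    S d χ ξ n u v w = (n.factorial : ℂ) * PowerSeries.coeff n
      (Aser d χ ξ u (v * w) * (Aser d χ ξ v (u * w) * Aser d χ ξ w (u * v))) := by
  rw [coeff_mul, Finset.Nat.sum_antidiagonal_eq_sum_range_succ_mk, Finset.mul_sum, S]
  refine Finset.sum_congr rfl fun k hk => ?_
  have hkn : k ≤ n := Nat.lt_succ_iff.mp (Finset.mem_range.mp hk)
  rw [coeff_mul, Finset.Nat.sum_antidiagonal_eq_sum_range_succ_mk]
  simp only [Nat.succ_eq_add_one]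
  rw [show n - k + 1 = n + 1 - k from (Nat.succ_sub hkn).symm, Finset.mul_sum, Finset.mul_sum]
  refine Finset.sum_congr rfl fun l hl => ?_
  have hln : l ≤ n - k := Nat.lt_succ_iff.mp (by
    have := Finset.mem_range.mp hl
    omega)
  rw [coeff_Aser d χ ξ u (v * w) k (Nat.mul_pos hu hd0),
      coeff_Aser d χ ξ v (u * w) l (Nat.mul_pos hv hd0),
      coeff_Aser d χ ξ w (u * v) (n - k - l) (Nat.mul_pos hw hd0)]
  have hk0 : (k.factorial : ℂ) ≠ 0 := Nat.cast_ne_zero.mpr k.factorial_ne_zero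
  have hl0 : (l.factorial : ℂ) ≠ 0 := Nat.cast_ne_zero.mpr l.factorial_ne_zero
  have hm0 : ((n - k - l).factorial : ℂ) ≠ 0 := Nat.cast_ne_zero.mpr (n - k - l).factorial_ne_zero
  have hc1 : ((v * w : ℕ) : ℂ) = (v : ℂ) * (w : ℂ) := by push_cast; ring
  have hc2 : ((u * w : ℕ) : ℂ) = (u : ℂ) * (w : ℂ) := by push_cast; ring
  have hc3 : ((u * v : ℕ) : ℂ) = (u : ℂ) * (v : ℂ) := by push_cast; ring
  rw [hc1, hc2, hc3, pow_add ((u:ℂ)) l, pow_add ((v:ℂ)) k, pow_add ((w:ℂ)) k]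
  field_simp
  ring

noncomputable def Phi (d : ℕ) (χ : ℤ → ℂ) (ξ : ℂ) (n : ℕ) (u v w : ℕ) : ℂ :=
  (n.factorial : ℂ) * PowerSeries.coeff n
    (Dser d χ ξ (v * w) * Dser d χ ξ (u * w) * Dser d χ ξ (u * v) *
      (Cser ξ (d * (u * v * w))) ^ 3 *
      (Cser ξ (d * (v * w)) * Cser ξ (d * (u * w)) * Cser ξ (d * (u * v)))⁻¹)

lemma S_eq_Phi (d : ℕ) (χ : ℤ → ℂ) (ξ : ℂ) (n u v w : ℕ)
    (hd : Odd d) (hd0 : 0 < d) (hχ : Function.Periodic χ (d : ℤ))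
    (hu : Odd u) (hv : Odd v) (hw : Odd w)
    (hu0 : 0 < u) (hv0 : 0 < v) (hw0 : 0 < w)
    (h1 : ξ ^ (d * (v * w)) + 1 ≠ 0) (h2 : ξ ^ (d * (u * w)) + 1 ≠ 0)
    (h3 : ξ ^ (d * (u * v)) + 1 ≠ 0) :
    S d χ ξ n u v w = Phi d χ ξ n u v w := by
  rw [S_eq_coeff d χ ξ n u v w hd0 hu0 hv0 hw0, Phi]
  congr 2
  set A1 := Aser d χ ξ u (v * w)
  set A2 := Aser d χ ξ v (u * w)
  set A3 := Aser d χ ξ w (u * v)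
  set C1 := Cser ξ (d * (v * w))
  set C2 := Cser ξ (d * (u * w))
  set C3 := Cser ξ (d * (u * v))
  have e1 : A1 * C1 = Dser d χ ξ (v * w) * Cser ξ (d * (u * v * w)) := by
    rw [Aser_mul_Cser d χ hχ ξ u (v * w) hd hu]
    congr 2
    ring
  have e2 : A2 * C2 = Dser d χ ξ (u * w) * Cser ξ (d * (u * v * w)) := by
    rw [Aser_mul_Cser d χ hχ ξ v (u * w) hd hv]
    congr 2
    ring
  have e3 : A3 * C3 = Dser d χ ξ (u * v) * Cser ξ (d * (u * v * w)) := by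
    rw [Aser_mul_Cser d χ hχ ξ w (u * v) hd hw]
    congr 2
    ring
  have hP : PowerSeries.constantCoeff (C1 * C2 * C3) ≠ 0 := by
    rw [map_mul, map_mul, constantCoeff_Cser, constantCoeff_Cser, constantCoeff_Cser]
    exact mul_ne_zero (mul_ne_zero (by rw [add_comm]; exact h1) (by rw [add_comm]; exact h2))
      (by rw [add_comm]; exact h3)
  have hPinv : (C1 * C2 * C3) * (C1 * C2 * C3)⁻¹ = 1 := PowerSeries.mul_inv_cancel _ hP
  calc A1 * (A2 * A3) = A1 * (A2 * A3) * ((C1 * C2 * C3) * (C1 * C2 * C3)⁻¹) := by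
        rw [hPinv, mul_one]
    _ = ((A1 * C1) * (A2 * C2) * (A3 * C3)) * (C1 * C2 * C3)⁻¹ := by ring
    _ = Dser d χ ξ (v * w) * Dser d χ ξ (u * w) * Dser d χ ξ (u * v) *
          (Cser ξ (d * (u * v * w))) ^ 3 * (C1 * C2 * C3)⁻¹ := by
        rw [e1, e2, e3]
        ring

lemma Phi_swap01 (d : ℕ) (χ : ℤ → ℂ) (ξ : ℂ) (n u v w : ℕ) :
    Phi d χ ξ n u v w = Phi d χ ξ n v u w := by
  unfold Phi
  rw [show v * u = u * v by ring,
    show Cser ξ (d * (u * w)) * Cser ξ (d * (v * w)) * Cser ξ (d * (u * v))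
      = Cser ξ (d * (v * w)) * Cser ξ (d * (u * w)) * Cser ξ (d * (u * v)) by ring]
  refine congrArg (fun p => (n.factorial : ℂ) * PowerSeries.coeff n p) ?_
  ring

lemma Phi_swap12 (d : ℕ) (χ : ℤ → ℂ) (ξ : ℂ) (n u v w : ℕ) :
    Phi d χ ξ n u v w = Phi d χ ξ n u w v := by
  unfold Phi
  rw [show w * v = v * w by ring, show u * w * v = u * v * w by ring,
    show Cser ξ (d * (v * w)) * Cser ξ (d * (u * v)) * Cser ξ (d * (u * w))
      = Cser ξ (d * (v * w)) * Cser ξ (d * (u * w)) * Cser ξ (d * (u * v)) by ring]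
  refine congrArg (fun p => (n.factorial : ℂ) * PowerSeries.coeff n p) ?_
  ring

attribute [irreducible] Phi

/-- The expression (a-3) is totally symmetric in `(w₁, w₂, w₃)`. -/
theorem type_a3_symmetric (d : ℕ) (hd : Odd d) (hd0 : 0 < d)
    (χ : ℤ → ℂ) (hχ : Function.Periodic χ (d : ℤ)) (ξ : ℂ)
    (w : Fin 3 → ℕ) (hw : ∀ i, 0 < w i) (hwodd : ∀ i, Odd (w i))
    (hξ : ∀ i j, i ≠ j → ξ ^ (d * w i * w j) + 1 ≠ 0)
    (n : ℕ) (σ : Equiv.Perm (Fin 3)) :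
    S d χ ξ n (w (σ 0)) (w (σ 1)) (w (σ 2)) = S d χ ξ n (w 0) (w 1) (w 2) := by
  have hξ' : ∀ i j : Fin 3, i ≠ j → ξ ^ (d * (w i * w j)) + 1 ≠ 0 := by
    intro i j hij
    rw [← Nat.mul_assoc]
    exact hξ i j hij
  have hSP : ∀ a b c : Fin 3, a ≠ b → a ≠ c → b ≠ c →
      S d χ ξ n (w a) (w b) (w c) = Phi d χ ξ n (w a) (w b) (w c) := by
    intro a b c hab hac hbc
    exact S_eq_Phi d χ ξ n (w a) (w b) (w c) hd hd0 hχ (hwodd a) (hwodd b) (hwodd c)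
      (hw a) (hw b) (hw c) (hξ' b c hbc) (hξ' a c hac) (hξ' a b hab)
  have key : ∀ a b c : Fin 3, a ≠ b → a ≠ c → b ≠ c →
      S d χ ξ n (w a) (w b) (w c) = S d χ ξ n (w 0) (w 1) (w 2) := by
    intro a b c hab hac hbc
    rw [hSP a b c hab hac hbc, hSP 0 1 2 (by decide) (by decide) (by decide)]
    fin_cases a <;> fin_cases b <;> fin_cases c <;> simp_all <;>
      first
      | rfl
      | exact (Phi_swap12 d χ ξ n (w 0) (w 1) (w 2)).symm
      | exact (Phi_swap01 d χ ξ n (w 0) (w 1) (w 2)).symm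
      | exact ((Phi_swap01 d χ ξ n (w 0) (w 1) (w 2)).trans
          (Phi_swap12 d χ ξ n (w 1) (w 0) (w 2))).symm
      | exact ((Phi_swap12 d χ ξ n (w 0) (w 1) (w 2)).trans
          (Phi_swap01 d χ ξ n (w 0) (w 2) (w 1))).symm
      | exact (((Phi_swap01 d χ ξ n (w 0) (w 1) (w 2)).trans
          (Phi_swap12 d χ ξ n (w 1) (w 0) (w 2))).trans
          (Phi_swap01 d χ ξ n (w 1) (w 2) (w 0))).symm
  exact key (σ 0) (σ 1) (σ 2)
    (fun h => absurd (σ.injective h) (by decide))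
    (fun h => absurd (σ.injective h) (by decide))
    (fun h => absurd (σ.injective h) (by decide))
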